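/- (Theorem 2) Consider a Conv–ReLU stack whose k-th output is a scalar: let W_k : Fin C × Fin H_k × Fin W_k → ℝ be the k-th kernel, X : Fin C × ℕ × ℕ → ℝ the input, Z_k = Σ_{c,h,w} W_k(c,h,w) · X(c,h,w) the scalar convolution output, and A_k = max(0, Z_k) the ReLU activation. Let ∇A_k ∈ ℝ be the upstream gradient, define ∇Z_k = ∇A_k if Z_k > 0 and 0 otherwise, and define the kernel gradient ∇W_k(c,h,w) = ∇Z_k · X(c,h,w). If A_k ≠ 0, then ∇A_k = ⟨∇W_k, W_k⟩_F / A_k, where ⟨∇W_k, W_k⟩_F = Σ_{c,h,w} ∇W_k(c,h,w) · W_k(c,h,w) is the Frobenius inner product. -/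
import Mathlib


/-- Theorem 2: in a Conv–ReLU stack whose `k`-th output is a scalar
`Z = ∑ c h w, W (c,h,w) * X (c,h,w)` with ReLU activation `A = max 0 Z`,
upstream gradient `∇A`, `∇Z = ∇A · 1[Z > 0]` and kernel gradient
`∇W (c,h,w) = ∇Z * X (c,h,w)`, if `A ≠ 0` then `∇A = ⟨∇W, W⟩_F / A`. -/
theorem conv_relu_gA (C Hk Wk : ℕ)
    (W : Fin C × Fin Hk × Fin Wk → ℝ) (X : Fin C × ℕ × ℕ → ℝ)
    (Z : ℝ)
    (hZ : Z = ∑ c : Fin C, ∑ h : Fin Hk, ∑ w : Fin Wk,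
      W (c, h, w) * X (c, (h : ℕ), (w : ℕ)))
    (A : ℝ) (hA : A = max 0 Z)
    (gA gZ : ℝ) (hgZ : gZ = if 0 < Z then gA else 0)
    (gW : Fin C × Fin Hk × Fin Wk → ℝ)
    (hgW : ∀ (c : Fin C) (h : Fin Hk) (w : Fin Wk),
      gW (c, h, w) = gZ * X (c, (h : ℕ), (w : ℕ)))
    (hAne : A ≠ 0) :
    gA = (∑ c : Fin C, ∑ h : Fin Hk, ∑ w : Fin Wk, gW (c, h, w) * W (c, h, w)) / A := by
  have hZpos : 0 < Z := by
    rcases lt_trichotomy Z 0 with h|h|h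
    · exact absurd (hA.trans (max_eq_left h.le)) hAne
    · exact absurd (hA.trans (by rw [h, max_self])) hAne
    · exact h
  have hAZ : A = Z := hA.trans (max_eq_right hZpos.le)
  have hgZ' : gZ = gA := by rw [hgZ, if_pos hZpos]
  have hsum : (∑ c : Fin C, ∑ h : Fin Hk, ∑ w : Fin Wk, gW (c, h, w) * W (c, h, w))
      = gA * Z := by
    rw [hZ, Finset.mul_sum]
    refine Finset.sum_congr rfl fun c _ => ?_
    rw [Finset.mul_sum]
    refine Finset.sum_congr rfl fun h _ => ?_
    rw [Finset.mul_sum]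
    refine Finset.sum_congr rfl fun w _ => ?_
    rw [hgW, hgZ']
    ring
  rw [hsum, hAZ, mul_div_assoc, div_self (hAZ ▸ hAne), mul_one]
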